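/- arXiv:2510.19744 — 2 statements merged into one kernel-verified Lean document; each statement's English description precedes it below -/
import Mathlib

section
/- Let A be a Boolean algebra and (μ_n) an anti-Nikodym sequence of measures on A with a unique Nikodym concentration point t in the Stone space of A. Then t is a strong Nikodym concentration point of (μ_n): for every N ∈ ω and every A ∈ t there exist a clopen set U contained in the clopen set of A but with t ∉ U, and n ∈ ω, such that |μ̂_n(U)| > N·(‖μ_n ↾ Aᶜ‖ + 1), where μ̂_n is the Radon extension of μ_n to the Stone space. -/
open Filter
open scoped ENNReal

variable {α : Type*}

/-- Finite additivity of a real-valued set function on a Boolean algebra. -/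
def FinAdd [BooleanAlgebra α] (μ : α → ℝ) : Prop :=
  ∀ a b : α, a ⊓ b = ⊥ → μ (a ⊔ b) = μ a + μ b

/-- The variation of `μ` over the subfamily `s`:
`sup {|μ a| + |μ b| : a, b ∈ s, a ⊓ b = ⊥}`, computed in `ℝ≥0∞`. -/
noncomputable def svar [BooleanAlgebra α] (μ : α → ℝ) (s : Set α) : ℝ≥0∞ :=
  ⨆ p : {p : α × α // p.1 ∈ s ∧ p.2 ∈ s ∧ p.1 ⊓ p.2 = ⊥},
    ENNReal.ofReal (|μ p.1.1| + |μ p.1.2|)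

/-- The variation norm of the restriction `μ ↾ a`, i.e. `|μ|(a)`. -/
noncomputable def bvar [BooleanAlgebra α] (μ : α → ℝ) (a : α) : ℝ≥0∞ :=
  svar μ (Set.Iic a)

/-- `t` is an ultrafilter on the Boolean algebra `α`. -/
structure IsUltrafilterSet [BooleanAlgebra α] (t : Set α) : Prop where
  top_mem : ⊤ ∈ t
  bot_not_mem : ⊥ ∉ t
  mem_of_le : ∀ ⦃a b : α⦄, a ∈ t → a ≤ b → b ∈ t
  inf_mem : ∀ ⦃a b : α⦄, a ∈ t → b ∈ t → a ⊓ b ∈ t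
open MeasureTheory

/-- A representation of the Boolean algebra `α` by the clopen subsets of its Stone space `S`. -/
structure StoneRep (α S : Type*) [BooleanAlgebra α] [TopologicalSpace S] where
  e : α → Set S
  isClopen : ∀ a, IsClopen (e a)
  map_bot : e ⊥ = ∅
  map_top : e ⊤ = Set.univ
  map_sup : ∀ a b, e (a ⊔ b) = e a ∪ e b
  map_inf : ∀ a b, e (a ⊓ b) = e a ∩ e b
  map_compl : ∀ a, e aᶜ = (e a)ᶜ
  injective : Function.Injective e
  surj_clopen : ∀ U : Set S, IsClopen U → ∃ a, e a = U
section Aux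
variable [BooleanAlgebra α]

lemma finAdd_bot {μ : α → ℝ} (h : FinAdd μ) : μ ⊥ = 0 := by
  have := h ⊥ ⊥ (by simp)
  simp only [sup_idem] at this; linarith

lemma bvar_mono (μ : α → ℝ) {a b : α} (hab : a ≤ b) : bvar μ a ≤ bvar μ b := by
  apply iSup_le
  rintro ⟨⟨p1, p2⟩, h1, h2, h3⟩
  exact le_iSup_of_le ⟨⟨p1, p2⟩, le_trans h1 hab, le_trans h2 hab, h3⟩ le_rfl

lemma bvar_bot {μ : α → ℝ} (h : FinAdd μ) : bvar μ ⊥ = 0 := by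
  refine le_antisymm (iSup_le ?_) zero_le
  rintro ⟨⟨p1, p2⟩, h1, h2, h3⟩
  simp only [Set.mem_Iic, le_bot_iff] at h1 h2
  simp [h1, h2, finAdd_bot h]

lemma bvar_sup_le {μ : α → ℝ} (h : FinAdd μ) (b c : α) :
    bvar μ (b ⊔ c) ≤ bvar μ b + bvar μ c := by
  apply iSup_le
  rintro ⟨⟨p1, p2⟩, h1, h2, h3⟩
  simp only [Set.mem_Iic] at h1 h2
  have split : ∀ p : α, μ p = μ (p ⊓ b) + μ (p ⊓ bᶜ) := by
    intro p
    have hd : (p ⊓ b) ⊓ (p ⊓ bᶜ) = ⊥ := by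
      rw [inf_inf_inf_comm]; simp
    have hs : (p ⊓ b) ⊔ (p ⊓ bᶜ) = p := by
      rw [← inf_sup_left]; simp
    have := h (p ⊓ b) (p ⊓ bᶜ) hd
    rw [hs] at this; exact this
  have tri : ∀ p : α, |μ p| ≤ |μ (p ⊓ b)| + |μ (p ⊓ bᶜ)| := by
    intro p; rw [split p]; exact abs_add_le _ _
  have hcle : ∀ p : α, p ≤ b ⊔ c → p ⊓ bᶜ ≤ c := by
    intro p hp
    calc p ⊓ bᶜ ≤ (b ⊔ c) ⊓ bᶜ := inf_le_inf_right _ hp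
    _ = (b ⊓ bᶜ) ⊔ (c ⊓ bᶜ) := by rw [inf_sup_right]
    _ ≤ c := by simp [inf_le_left]
  have hd1 : (p1 ⊓ b) ⊓ (p2 ⊓ b) = ⊥ := by
    refine le_bot_iff.mp ?_
    calc (p1 ⊓ b) ⊓ (p2 ⊓ b) ≤ p1 ⊓ p2 := inf_le_inf inf_le_left inf_le_left
    _ = ⊥ := h3
  have hd2 : (p1 ⊓ bᶜ) ⊓ (p2 ⊓ bᶜ) = ⊥ := by
    refine le_bot_iff.mp ?_
    calc (p1 ⊓ bᶜ) ⊓ (p2 ⊓ bᶜ) ≤ p1 ⊓ p2 := inf_le_inf inf_le_left inf_le_left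
    _ = ⊥ := h3
  calc ENNReal.ofReal (|μ p1| + |μ p2|)
      ≤ ENNReal.ofReal ((|μ (p1 ⊓ b)| + |μ (p2 ⊓ b)|) + (|μ (p1 ⊓ bᶜ)| + |μ (p2 ⊓ bᶜ)|)) := by
        apply ENNReal.ofReal_le_ofReal
        have := tri p1; have := tri p2; linarith
    _ = ENNReal.ofReal (|μ (p1 ⊓ b)| + |μ (p2 ⊓ b)|)
        + ENNReal.ofReal (|μ (p1 ⊓ bᶜ)| + |μ (p2 ⊓ bᶜ)|) :=
        ENNReal.ofReal_add (by positivity) (by positivity)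
    _ ≤ bvar μ b + bvar μ c := by
        refine add_le_add ?_ ?_
        · exact le_iSup_of_le ⟨⟨p1 ⊓ b, p2 ⊓ b⟩, inf_le_right, inf_le_right, hd1⟩ le_rfl
        · exact le_iSup_of_le ⟨⟨p1 ⊓ bᶜ, p2 ⊓ bᶜ⟩, hcle p1 h1, hcle p2 h2, hd2⟩ le_rfl

lemma bvar_finsetSup_le {μ : α → ℝ} (h : FinAdd μ) {ι : Type*} (s : Finset ι) (f : ι → α) :
    bvar μ (s.sup f) ≤ ∑ i ∈ s, bvar μ (f i) := by
  classical
  induction s using Finset.cons_induction with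
  | empty => simp [bvar_bot h]
  | cons i s hi ih =>
    rw [Finset.sup_cons, Finset.sum_cons]
    exact le_trans (bvar_sup_le h _ _) (add_le_add le_rfl ih)

end Aux

lemma stoneRep_le_iff {α S : Type*} [BooleanAlgebra α] [TopologicalSpace S]
    (R : StoneRep α S) {a b : α} : a ≤ b ↔ R.e a ⊆ R.e b := by
  constructor
  · intro h
    have : a ⊓ b = a := inf_eq_left.mpr h
    calc R.e a = R.e (a ⊓ b) := by rw [this]
    _ = R.e a ∩ R.e b := R.map_inf a b
    _ ⊆ R.e b := Set.inter_subset_right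
  · intro h
    have : R.e (a ⊓ b) = R.e a := by rw [R.map_inf, Set.inter_eq_left.mpr h]
    exact inf_eq_left.mp (R.injective this)

/-- If an anti-Nikodym sequence `(μ_n)` on a Boolean algebra has a unique Nikodym
concentration point `t` in the Stone space, then `t` is a strong Nikodym concentration
point of `(μ_n)`. -/
theorem stmt_3 {α S : Type*} [BooleanAlgebra α] [TopologicalSpace S] [CompactSpace S]
    [T2Space S] [TotallyDisconnectedSpace S] [MeasurableSpace S] [BorelSpace S]
    (R : StoneRep α S) (μ : ℕ → α → ℝ)
    (hadd : ∀ n, FinAdd (μ n)) (hbdd : ∀ n, bvar (μ n) ⊤ ≠ ⊤)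
    (hpt : ∀ a : α, Tendsto (fun n => μ n a) atTop (nhds 0))
    (hub : (⨆ n, bvar (μ n) ⊤) = ⊤)
    (μhat : ℕ → MeasureTheory.SignedMeasure S)
    (hext : ∀ n a, μhat n (R.e a) = μ n a)
    (hreg : ∀ n, ((μhat n).totalVariation).Regular)
    (t : S)
    (ht : ∀ a : α, t ∈ R.e a → (⨆ n, bvar (μ n) a) = ⊤)
    (huniq : ∀ x : S, (∀ a : α, x ∈ R.e a → (⨆ n, bvar (μ n) a) = ⊤) → x = t) :
    ∀ (N : ℕ) (a : α), t ∈ R.e a →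
      ∃ U : Set S, IsClopen U ∧ U ⊆ R.e a ∧ t ∉ U ∧
        ∃ n : ℕ, (N : ℝ) * ((bvar (μ n) aᶜ).toReal + 1) < |μhat n U| := by
  intro N a hta
  -- Step 1: every point outside e a has a clopen neighborhood of bounded variation
  have hne : ∀ x : S, x ∈ (R.e a)ᶜ → ∃ b : α, x ∈ R.e b ∧ (⨆ n, bvar (μ n) b) ≠ ⊤ := by
    intro x hx
    by_contra hcon
    push_neg at hcon
    exact hx ((huniq x hcon) ▸ hta)
  choose b hb hbne using hne
  -- compactness: finite subcover
  have hcpt : IsCompact ((R.e a)ᶜ) := ((R.isClopen a).isOpen.isClosed_compl).isCompact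
  have hcov : (R.e a)ᶜ ⊆ ⋃ x : ((R.e a)ᶜ : Set S), R.e (b x x.2) := by
    intro y hy
    exact Set.mem_iUnion.mpr ⟨⟨y, hy⟩, hb y hy⟩
  obtain ⟨I, hI⟩ := hcpt.elim_finite_subcover (fun x : ((R.e a)ᶜ : Set S) => R.e (b x x.2))
    (fun x => (R.isClopen _).isOpen) hcov
  have hac : aᶜ ≤ I.sup (fun i => b i i.2) := by
    rw [stoneRep_le_iff R, R.map_compl]
    refine hI.trans ?_
    refine Set.iUnion₂_subset fun i hi => ?_
    exact (stoneRep_le_iff R).mp (Finset.le_sup (f := fun i : ((R.e a)ᶜ : Set S) => b i i.2) hi)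
  set Cbar : ℝ≥0∞ := ∑ i ∈ I, ⨆ n, bvar (μ n) (b i i.2) with hCbardef
  have hCbar : Cbar ≠ ⊤ := by
    rw [hCbardef]
    exact (ENNReal.sum_lt_top.mpr fun (i : ((R.e a)ᶜ : Set S)) _ => (hbne i i.2).lt_top).ne
  have hCn : ∀ n, bvar (μ n) aᶜ ≤ Cbar := by
    intro n
    refine (bvar_mono _ hac).trans ?_
    refine (bvar_finsetSup_le (hadd n) I _).trans ?_
    exact Finset.sum_le_sum fun i _ => le_iSup (fun m => bvar (μ m) (b i i.2)) n
  set C : ℝ := Cbar.toReal with hCdef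
  have hC : ∀ n, (bvar (μ n) aᶜ).toReal ≤ C := fun n => ENNReal.toReal_mono hCbar (hCn n)
  have hC0 : 0 ≤ C := ENNReal.toReal_nonneg
  set M : ℝ := (N : ℝ) * (C + 1) with hMdef
  have hM0 : 0 ≤ M := by positivity
  -- Step 2: n₀ with |μ n a| < 1 for n ≥ n₀
  obtain ⟨n₀, hn₀⟩ := Metric.tendsto_atTop.mp (hpt a) 1 one_pos
  have habs : ∀ n ≥ n₀, |μ n a| < 1 := by
    intro n hn
    have := hn₀ n hn
    rwa [Real.dist_eq, sub_zero] at this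
  -- Step 3: choose n ≥ n₀ with huge variation on a
  set K : ℝ≥0∞ := ENNReal.ofReal (2 * M + 4) ⊔ (Finset.range n₀).sup (fun m => bvar (μ m) a)
    with hKdef
  have hbvarne : ∀ m, bvar (μ m) a < ⊤ :=
    fun m => lt_of_le_of_lt (bvar_mono _ le_top) (hbdd m).lt_top
  have hKlt : K < ⊤ := by
    rw [hKdef]
    refine sup_lt_iff.mpr ⟨ENNReal.ofReal_lt_top, ?_⟩
    exact (Finset.sup_lt_iff (by simp)).mpr fun m _ => hbvarne m
  have hlt : K < ⨆ n, bvar (μ n) a := by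
    rw [ht a hta]; exact hKlt
  obtain ⟨n, hn⟩ := lt_iSup_iff.mp hlt
  have hnge : n ≥ n₀ := by
    by_contra hcon
    push_neg at hcon
    have hle : bvar (μ n) a ≤ K := le_trans
      (Finset.le_sup (f := fun m => bvar (μ m) a) (Finset.mem_range.mpr hcon)) le_sup_right
    exact absurd hn (not_lt.mpr hle)
  have hbig : ENNReal.ofReal (2 * M + 4) < bvar (μ n) a := lt_of_le_of_lt le_sup_left hn
  obtain ⟨⟨⟨b1, b2⟩, hb1, hb2, hb12⟩, hp⟩ := lt_iSup_iff.mp hbig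
  simp only [Set.mem_Iic] at hb1 hb2
  have hsum : 2 * M + 4 < |μ n b1| + |μ n b2| := by
    have := (ENNReal.ofReal_lt_ofReal_iff_of_nonneg (by linarith)).mp hp
    exact this
  -- pick the big piece
  obtain ⟨d, hda, hdbig⟩ : ∃ d : α, d ≤ a ∧ M + 2 < |μ n d| := by
    rcases le_or_gt (|μ n b1|) (M + 2) with h1 | h1
    · exact ⟨b2, hb2, by linarith⟩
    · exact ⟨b1, hb1, h1⟩
  have hLHS : (N : ℝ) * ((bvar (μ n) aᶜ).toReal + 1) ≤ M := by
    rw [hMdef]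
    have := hC n
    have h1 : (bvar (μ n) aᶜ).toReal + 1 ≤ C + 1 := by linarith
    exact mul_le_mul_of_nonneg_left h1 (Nat.cast_nonneg N)
  by_cases htd : t ∈ R.e d
  · -- use a ⊓ dᶜ
    refine ⟨R.e (a ⊓ dᶜ), R.isClopen _, (stoneRep_le_iff R).mp inf_le_left, ?_, n, ?_⟩
    · rw [R.map_inf, R.map_compl]
      exact fun hmem => hmem.2 htd
    · rw [hext]
      have hdisj : d ⊓ (a ⊓ dᶜ) = ⊥ := by
        refine le_bot_iff.mp ?_
        calc d ⊓ (a ⊓ dᶜ) ≤ d ⊓ dᶜ := inf_le_inf le_rfl inf_le_right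
        _ = ⊥ := by simp
      have hsupeq : d ⊔ (a ⊓ dᶜ) = a := by
        rw [sup_inf_left, sup_compl_eq_top, inf_top_eq, sup_eq_right.mpr hda]
      have heq : μ n a = μ n d + μ n (a ⊓ dᶜ) := by
        have := hadd n d (a ⊓ dᶜ) hdisj
        rwa [hsupeq] at this
      have h1 : |μ n a| < 1 := habs n hnge
      have h2 : |μ n d| - |μ n a| ≤ |μ n (a ⊓ dᶜ)| := by
        have : μ n (a ⊓ dᶜ) = μ n a - μ n d := by linarith
        rw [this]
        calc |μ n d| - |μ n a| ≤ |μ n d - μ n a| := abs_sub_abs_le_abs_sub _ _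
        _ = |μ n a - μ n d| := abs_sub_comm _ _
      linarith
  · refine ⟨R.e d, R.isClopen _, (stoneRep_le_iff R).mp hda, htd, n, ?_⟩
    rw [hext]
    linarith
end

section
/- Let A be an infinite Boolean algebra and I an ideal in A. Then I has the Nikodym property (every sequence of bounded finitely additive measures on I converging pointwise to 0 on I is uniformly norm bounded) if and only if the Boolean algebra A⟨I⟩ = I ∪ I* has the Nikodym property (every sequence in ba(A⟨I⟩) converging pointwise to 0 on A⟨I⟩ is norm bounded). -/
open Filter
open scoped ENNReal

variable {α : Type*}

/-- Finite additivity on the subfamily `s`. -/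
def FinAddOn [BooleanAlgebra α] (s : Set α) (μ : α → ℝ) : Prop :=
  ∀ a b : α, a ∈ s → b ∈ s → a ⊓ b = ⊥ → μ (a ⊔ b) = μ a + μ b

/-- The subalgebra `A⟨I⟩ = I ∪ I*` of `α` generated by the ideal `I`. -/
def genSet [BooleanAlgebra α] (I : Order.Ideal α) : Set α := {a : α | a ∈ I ∨ aᶜ ∈ I}

open Classical in
/-- The extension `T_c(μ)` of a measure `μ ∈ ba(I)` to `A⟨I⟩`:
`T_c(μ)(a) = μ(a)` if `a ∈ I`, and `T_c(μ)(a) = -μ(aᶜ) + c` otherwise. -/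
noncomputable def extMap [BooleanAlgebra α] (I : Order.Ideal α) (μ : α → ℝ) (c : ℝ) :
    α → ℝ :=
  fun a => if a ∈ I then μ a else -μ aᶜ + c
/-- The Nikodym property for measures on the subfamily `s` of a Boolean algebra:
every sequence of bounded finitely additive measures on `s` converging pointwise to `0`
on `s` is uniformly norm bounded. -/
def NikodymOn [BooleanAlgebra α] (s : Set α) : Prop :=
  ∀ μ : ℕ → α → ℝ, (∀ n, FinAddOn s (μ n)) → (∀ n, svar (μ n) s ≠ ⊤) →
    (∀ a ∈ s, Tendsto (fun n => μ n a) atTop (nhds 0)) →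
    (⨆ n, svar (μ n) s) ≠ ⊤


lemma svar_mono' [BooleanAlgebra α] {μ ν : α → ℝ} {s t : Set α}
    (hst : s ⊆ t) (h : ∀ a ∈ s, μ a = ν a) : svar μ s ≤ svar ν t := by
  refine iSup_le ?_
  rintro ⟨⟨a, b⟩, ha, hb, hab⟩
  calc ENNReal.ofReal (|μ a| + |μ b|) = ENNReal.ofReal (|ν a| + |ν b|) := by
        rw [h a ha, h b hb]
    _ ≤ _ := le_iSup (fun p : {p : α × α // p.1 ∈ t ∧ p.2 ∈ t ∧ p.1 ⊓ p.2 = ⊥} =>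
        ENNReal.ofReal (|ν p.1.1| + |ν p.1.2|)) ⟨⟨a, b⟩, hst ha, hst hb, hab⟩

lemma abs_le_svar [BooleanAlgebra α] {μ : α → ℝ} {s : Set α} {a : α}
    (ha : a ∈ s) (hbot : ⊥ ∈ s) : ENNReal.ofReal |μ a| ≤ svar μ s := by
  calc ENNReal.ofReal |μ a| ≤ ENNReal.ofReal (|μ a| + |μ ⊥|) :=
        ENNReal.ofReal_le_ofReal (le_add_of_nonneg_right (abs_nonneg _))
    _ ≤ _ := le_iSup (fun p : {p : α × α // p.1 ∈ s ∧ p.2 ∈ s ∧ p.1 ⊓ p.2 = ⊥} =>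
        ENNReal.ofReal (|μ p.1.1| + |μ p.1.2|)) ⟨⟨a, ⊥⟩, ha, hbot, inf_bot_eq a⟩

lemma svar_le_of_bound [BooleanAlgebra α] {μ : α → ℝ} {s : Set α} {C : ℝ≥0∞}
    (h : ∀ a ∈ s, ENNReal.ofReal |μ a| ≤ C) : svar μ s ≤ C + C := by
  refine iSup_le ?_
  rintro ⟨⟨a, b⟩, ha, hb, hab⟩
  calc ENNReal.ofReal (|μ a| + |μ b|) ≤ ENNReal.ofReal |μ a| + ENNReal.ofReal |μ b| :=
        ENNReal.ofReal_add_le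
    _ ≤ C + C := add_le_add (h a ha) (h b hb)

lemma key_add [BooleanAlgebra α] {I : Order.Ideal α} {μ : α → ℝ}
    (hμ : FinAddOn (I : Set α) μ) {a b : α} (haI : a ∈ I) (hbc : bᶜ ∈ I)
    (hab : a ⊓ b = ⊥) : μ bᶜ = μ a + μ (aᶜ ⊓ bᶜ) := by
  have hle : a ≤ bᶜ := le_compl_iff_disjoint_right.2 (disjoint_iff.2 hab)
  have hmem : aᶜ ⊓ bᶜ ∈ I := I.lower inf_le_right hbc
  have hdisj : a ⊓ (aᶜ ⊓ bᶜ) = ⊥ := by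
    rw [← inf_assoc, inf_compl_eq_bot, bot_inf_eq]
  have hsup : a ⊔ aᶜ ⊓ bᶜ = bᶜ := by
    rw [sup_inf_left, sup_compl_eq_top, top_inf_eq, sup_eq_right.2 hle]
  have := hμ a (aᶜ ⊓ bᶜ) haI hmem hdisj
  rwa [hsup] at this

lemma finAdd_ext [BooleanAlgebra α] {I : Order.Ideal α} {μ : α → ℝ}
    (hμ : FinAddOn (I : Set α) μ) : FinAddOn (genSet I) (extMap I μ 0) := by
  intro a b ha hb hab
  by_cases haI : a ∈ I <;> by_cases hbI : b ∈ I
  · have hs : a ⊔ b ∈ I := I.sup_mem haI hbI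
    simp only [extMap, if_pos haI, if_pos hbI, if_pos hs]
    exact hμ a b haI hbI hab
  · have hbc : bᶜ ∈ I := hb.resolve_left hbI
    have hs : a ⊔ b ∉ I := fun h => hbI (I.lower le_sup_right h)
    simp only [extMap, if_pos haI, if_neg hbI, if_neg hs, compl_sup]
    have := key_add hμ haI hbc hab
    linarith
  · have hac : aᶜ ∈ I := ha.resolve_left haI
    have hs : a ⊔ b ∉ I := fun h => haI (I.lower le_sup_left h)
    simp only [extMap, if_pos hbI, if_neg haI, if_neg hs, compl_sup]
    have := key_add hμ hbI hac (by rwa [inf_comm])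
    rw [inf_comm aᶜ bᶜ]
    linarith
  · exfalso
    have hbc : bᶜ ∈ I := hb.resolve_left hbI
    exact haI (I.lower (le_compl_iff_disjoint_right.2 (disjoint_iff.2 hab)) hbc)

/-- An ideal `I` in an infinite Boolean algebra has the Nikodym property if and only if
the generated subalgebra `A⟨I⟩ = I ∪ I*` has the Nikodym property. -/
theorem stmt_8 [BooleanAlgebra α] [Infinite α] (I : Order.Ideal α) :
    NikodymOn (I : Set α) ↔ NikodymOn (genSet I) := by
  have hIsub : (I : Set α) ⊆ genSet I := fun a ha => Or.inl ha
  have hbotI : (⊥ : α) ∈ (I : Set α) := I.bot_mem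
  have htopgen : (⊤ : α) ∈ genSet I := Or.inr (by rw [compl_top]; exact I.bot_mem)
  constructor
  · -- Nikodym on I → Nikodym on genSet I
    intro hNik ν hadd hfin htend
    have haddI : ∀ n, FinAddOn (I : Set α) (ν n) := fun n a b ha hb hab =>
      hadd n a b (hIsub ha) (hIsub hb) hab
    have hleI : ∀ n, svar (ν n) (I : Set α) ≤ svar (ν n) (genSet I) := fun n =>
      svar_mono' hIsub (fun _ _ => rfl)
    have hfinI : ∀ n, svar (ν n) (I : Set α) ≠ ⊤ := fun n =>
      (lt_of_le_of_lt (hleI n) (lt_top_iff_ne_top.2 (hfin n))).ne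
    have hsupI : (⨆ n, svar (ν n) (I : Set α)) ≠ ⊤ :=
      hNik ν haddI hfinI (fun a ha => htend a (hIsub ha))
    -- bound on |ν n ⊤|
    have htop : Tendsto (fun n => |ν n ⊤|) atTop (nhds 0) := by
      simpa using (htend ⊤ htopgen).abs
    obtain ⟨M, hM⟩ := htop.bddAbove_range
    have hM' : ∀ n, |ν n ⊤| ≤ M := fun n => hM (Set.mem_range_self n)
    have hbd : ∀ n, ∀ a ∈ genSet I,
        ENNReal.ofReal |ν n a| ≤ ENNReal.ofReal M + svar (ν n) (I : Set α) := by
      intro n a ha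
      rcases ha with haI | hac
      · exact le_trans (abs_le_svar haI hbotI) le_add_self
      · have hacg : aᶜ ∈ genSet I := Or.inl hac
        have heq : ν n ⊤ = ν n a + ν n aᶜ := by
          have := hadd n a aᶜ (Or.inr hac) hacg inf_compl_eq_bot
          rwa [sup_compl_eq_top] at this
        have habs : |ν n a| ≤ M + |ν n aᶜ| := by
          have h1 : ν n a = ν n ⊤ - ν n aᶜ := by linarith
          have h2 : |ν n ⊤ - ν n aᶜ| ≤ |ν n ⊤| + |ν n aᶜ| := by
            calc |ν n ⊤ - ν n aᶜ| = |ν n ⊤ + -ν n aᶜ| := by rw [sub_eq_add_neg]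
              _ ≤ |ν n ⊤| + |-ν n aᶜ| := abs_add_le _ _
              _ = |ν n ⊤| + |ν n aᶜ| := by rw [abs_neg]
          rw [h1]
          linarith [hM' n]
        calc ENNReal.ofReal |ν n a| ≤ ENNReal.ofReal (M + |ν n aᶜ|) :=
              ENNReal.ofReal_le_ofReal habs
          _ ≤ ENNReal.ofReal M + ENNReal.ofReal |ν n aᶜ| := ENNReal.ofReal_add_le
          _ ≤ ENNReal.ofReal M + svar (ν n) (I : Set α) :=
              add_le_add_right (abs_le_svar hac hbotI) _
    have hfinal : (⨆ n, svar (ν n) (genSet I)) ≤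
        (ENNReal.ofReal M + ⨆ n, svar (ν n) (I : Set α)) +
        (ENNReal.ofReal M + ⨆ n, svar (ν n) (I : Set α)) := by
      refine iSup_le fun n => ?_
      refine le_trans (svar_le_of_bound (hbd n)) ?_
      have h2 : ENNReal.ofReal M + svar (ν n) (I : Set α) ≤
          ENNReal.ofReal M + ⨆ m, svar (ν m) (I : Set α) :=
        add_le_add_right (le_iSup (fun m => svar (ν m) (I : Set α)) n) _
      exact add_le_add h2 h2
    refine ne_top_of_le_ne_top ?_ hfinal
    exact ENNReal.add_ne_top.2 ⟨ENNReal.add_ne_top.2 ⟨ENNReal.ofReal_ne_top, hsupI⟩,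
      ENNReal.add_ne_top.2 ⟨ENNReal.ofReal_ne_top, hsupI⟩⟩
  · -- Nikodym on genSet I → Nikodym on I
    intro hNik μ hadd hfin htend
    set ν : ℕ → α → ℝ := fun n => extMap I (μ n) 0 with hν
    have extIeq : ∀ n, ∀ a ∈ (I : Set α), ν n a = μ n a := fun n a ha => if_pos ha
    have haddg : ∀ n, FinAddOn (genSet I) (ν n) := fun n => finAdd_ext (hadd n)
    have hbd : ∀ n, ∀ a ∈ genSet I, ENNReal.ofReal |ν n a| ≤ svar (μ n) (I : Set α) := by
      intro n a ha
      by_cases haI : a ∈ I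
      · rw [extIeq n a haI]
        exact abs_le_svar haI hbotI
      · have hac : aᶜ ∈ I := ha.resolve_left haI
        have : ν n a = -μ n aᶜ + 0 := if_neg haI
        rw [this]
        simpa using abs_le_svar (μ := μ n) hac hbotI
    have hle : ∀ n, svar (ν n) (genSet I) ≤
        svar (μ n) (I : Set α) + svar (μ n) (I : Set α) := fun n =>
      svar_le_of_bound (hbd n)
    have hfing : ∀ n, svar (ν n) (genSet I) ≠ ⊤ := fun n =>
      ne_top_of_le_ne_top (ENNReal.add_ne_top.2 ⟨hfin n, hfin n⟩) (hle n)
    have htendg : ∀ a ∈ genSet I, Tendsto (fun n => ν n a) atTop (nhds 0) := by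
      intro a ha
      by_cases haI : a ∈ I
      · exact (htend a haI).congr (fun n => (extIeq n a haI).symm)
      · have hac : aᶜ ∈ I := ha.resolve_left haI
        have : Tendsto (fun n => -μ n aᶜ + 0) atTop (nhds 0) := by
          simpa using (htend aᶜ hac).neg
        exact this.congr (fun n => (if_neg haI).symm)
    have hsupg : (⨆ n, svar (ν n) (genSet I)) ≠ ⊤ := hNik ν haddg hfing htendg
    refine ne_top_of_le_ne_top hsupg ?_
    exact iSup_mono fun n => svar_mono' hIsub (fun a ha => (extIeq n a ha).symm)
end
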